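/- If a finite family of unit vectors {φ_j}_{j=1}^m in a complex Hilbert space admits positive semidefinite operators E_1, …, E_m with ⟨φ_j, E_i φ_j⟩ = 0 for all j ≠ i and ⟨φ_i, E_i φ_i⟩ > 0 for all i, then the vectors φ_1, …, φ_m are linearly independent. -/

import Mathlib

open scoped ComplexInnerProductSpace ComplexOrder

lemma psd_cross_zero {H : Type*} [NormedAddCommGroup H] [InnerProductSpace ℂ H]
    (T : H →ₗ[ℂ] H) (hpsd : ∀ x : H, 0 ≤ ⟪x, T x⟫)
    {v : H} (hv : ⟪v, T v⟫ = 0) (u : H) : ⟪u, T v⟫ = 0 := by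
  have hreal : ∀ w : H, (starRingEnd ℂ) ⟪w, T w⟫ = ⟪w, T w⟫ := by
    intro w
    have h := hpsd w
    rw [Complex.le_def] at h
    exact Complex.conj_eq_iff_im.mpr h.2.symm
  have hsym : T.IsSymmetric := by
    rw [LinearMap.isSymmetric_iff_inner_map_self_real]
    intro w
    rw [← inner_conj_symm (T w) w, Complex.conj_conj, hreal]
  set a := ⟪u, T v⟫ with ha
  by_contra hne
  have hnsq : 0 < Complex.normSq a := by
    simpa using Complex.normSq_pos.mpr hne
  have hvu : ⟪v, T u⟫ = (starRingEnd ℂ) a := by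
    rw [← hsym v u, ← inner_conj_symm]
  have hexp : ∀ s : ℝ, ⟪u - ((s : ℂ) * (starRingEnd ℂ) a) • v,
      T (u - ((s : ℂ) * (starRingEnd ℂ) a) • v)⟫
      = ⟪u, T u⟫ - 2 * s * Complex.normSq a := by
    intro s
    rw [map_sub, map_smul, inner_sub_left, inner_sub_right, inner_sub_right,
      inner_smul_left, inner_smul_left, inner_smul_right, inner_smul_right,
      hv, hvu, ← ha]
    simp only [map_mul, Complex.conj_conj, Complex.conj_ofReal,
      Complex.normSq_eq_conj_mul_self]
    push_cast
    ring
  set t : ℝ := ((⟪u, T u⟫).re + 1) / (2 * Complex.normSq a) with ht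
  have key := hpsd (u - ((t : ℂ) * (starRingEnd ℂ) a) • v)
  rw [hexp t] at key
  rw [Complex.le_def] at key
  have hre : 0 ≤ (⟪u, T u⟫).re - 2 * t * Complex.normSq a := by
    simpa using key.1
  have : 2 * t * Complex.normSq a = (⟪u, T u⟫).re + 1 := by
    rw [ht]
    field_simp
  linarith [hre, this ▸ hre]

/-- if unit vectors `φ j` admit positive semidefinite operators `E i`
with `⟨φ j, E i φ j⟩ = 0` for `j ≠ i` and `⟨φ i, E i φ i⟩ > 0`, then the `φ j`
are linearly independent. -/
theorem stmt4 {H : Type*} [NormedAddCommGroup H] [InnerProductSpace ℂ H] [CompleteSpace H]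
    (m : ℕ) (φ : Fin m → H) (hφ : ∀ j, ‖φ j‖ = 1)
    (E : Fin m → H →ₗ[ℂ] H)
    (hpsd : ∀ i (x : H), 0 ≤ ⟪x, E i x⟫)
    (hoff : ∀ i j, j ≠ i → ⟪φ j, E i (φ j)⟫ = 0)
    (hdiag : ∀ i, 0 < ⟪φ i, E i (φ i)⟫) :
    LinearIndependent ℂ φ := by
  rw [Fintype.linearIndependent_iff]
  intro c hc i
  have hz : ⟪φ i, E i (∑ j, c j • φ j)⟫ = 0 := by rw [hc]; simp
  have hexp : ⟪φ i, E i (∑ j, c j • φ j)⟫ = c i * ⟪φ i, E i (φ i)⟫ := by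
    rw [map_sum, inner_sum]
    rw [Finset.sum_eq_single i]
    · rw [map_smul, inner_smul_right]
    · intro j _ hji
      rw [map_smul, inner_smul_right,
        psd_cross_zero (E i) (hpsd i) (hoff i j hji) (φ i), mul_zero]
    · simp
  rw [hexp] at hz
  rcases mul_eq_zero.mp hz with h | h
  · exact h
  · exact absurd h (ne_of_gt (hdiag i))
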